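/- The L^1 norms of the Dirichlet–Walsh kernels are unbounded: sup over m of ∫_0^1 |D_m(x)| dx = ∞. -/

import Mathlib

open MeasureTheory Filter Finset

/-- The 1-periodic base Rademacher function: `1` on `[0,1/2)`, `-1` on `[1/2,1)`. -/
noncomputable def r0 (x : ℝ) : ℝ := if Int.fract x < 1/2 then 1 else -1

/-- The `k`-th Rademacher function `r_k(x) = r_0(2^k x)`. -/
noncomputable def rad (k : ℕ) (x : ℝ) : ℝ := r0 (2 ^ k * x)

/-- The Walsh–Paley function `W_n`: product of the Rademacher functions `r_k`
over the bits `k` appearing in the binary expansion of `n`. -/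
noncomputable def walsh (n : ℕ) (x : ℝ) : ℝ :=
  ∏ k ∈ Finset.range n, if n.testBit k then rad k x else 1

/-- The Dirichlet–Walsh kernel `D_m(x) = ∑_{i=0}^{m-1} W_i(x)`. -/
noncomputable def walshDirichlet (m : ℕ) (x : ℝ) : ℝ :=
  ∑ i ∈ Finset.range m, walsh i x

lemma abs_r0 (x : ℝ) : |r0 x| = 1 := by
  unfold r0; split <;> simp

lemma abs_walsh (n : ℕ) (x : ℝ) : |walsh n x| = 1 := by
  unfold walsh
  rw [Finset.abs_prod]
  apply Finset.prod_eq_one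
  intro k _
  cases h : n.testBit k <;> simp [h, rad, abs_r0]

lemma walsh_eq_prod (n M : ℕ) (h : n ≤ M) (x : ℝ) :
    walsh n x = ∏ k ∈ Finset.range M, if n.testBit k then rad k x else 1 := by
  unfold walsh
  apply Finset.prod_subset (Finset.range_subset_range.mpr h)
  intro k _ hk
  simp only [Finset.mem_range, not_lt] at hk
  have hn : n < 2 ^ k := lt_of_lt_of_le Nat.lt_two_pow_self (Nat.pow_le_pow_right (by norm_num) hk)
  simp [Nat.testBit_lt_two_pow hn]

lemma rad_succ (k : ℕ) (x : ℝ) : rad (k+1) x = rad k (2*x) := by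
  unfold rad; congr 1; ring

lemma measurable_r0 : Measurable r0 := by
  unfold r0
  exact Measurable.ite (measurableSet_lt measurable_fract measurable_const) measurable_const measurable_const

lemma walsh_two_mul (n : ℕ) (x : ℝ) : walsh (2*n) x = walsh n (2*x) := by
  rw [walsh_eq_prod (2*n) (2*n+1) (by omega) x, Finset.prod_range_succ']
  have h0 : (2*n).testBit 0 = false := by simp [Nat.testBit_zero]
  have hs : ∀ k, (2*n).testBit (k+1) = n.testBit k := by
    intro k; simp [Nat.testBit_succ]
  simp only [h0, hs, Bool.false_eq_true, if_false, mul_one]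
  rw [walsh_eq_prod n (2*n) (by omega) (2*x)]
  apply Finset.prod_congr rfl
  intro k _
  cases h : n.testBit k <;> simp [h, rad_succ]

lemma walsh_two_mul_add_one (n : ℕ) (x : ℝ) : walsh (2*n+1) x = r0 x * walsh n (2*x) := by
  rw [walsh_eq_prod (2*n+1) (2*n+1) le_rfl x, Finset.prod_range_succ']
  have h0 : (2*n+1).testBit 0 = true := by rw [Nat.testBit_zero]; simp
  have hs : ∀ k, (2*n+1).testBit (k+1) = n.testBit k := by
    intro k; rw [Nat.testBit_succ]; congr 1; omega
  simp only [h0, if_true, hs]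
  have : rad 0 x = r0 x := by unfold rad; norm_num
  rw [this, mul_comm]
  congr 1
  rw [walsh_eq_prod n (2*n) (by omega) (2*x)]
  apply Finset.prod_congr rfl
  intro k _
  cases h : n.testBit k <;> simp [h, rad_succ]

lemma walshDirichlet_two_mul (m : ℕ) (x : ℝ) :
    walshDirichlet (2*m) x = (1 + r0 x) * walshDirichlet m (2*x) := by
  induction m with
  | zero => simp [walshDirichlet]
  | succ n ih =>
    have h2 : 2*(n+1) = (2*n+1)+1 := by ring
    rw [h2]
    unfold walshDirichlet at *
    rw [Finset.sum_range_succ, Finset.sum_range_succ, ih, Finset.sum_range_succ,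
      walsh_two_mul, walsh_two_mul_add_one]
    ring

lemma walsh_four_mul (m : ℕ) (x : ℝ) : walsh (4*m) x = walsh m (4*x) := by
  have : 4*m = 2*(2*m) := by ring
  rw [this, walsh_two_mul, walsh_two_mul]
  congr 1; ring

lemma walshDirichlet_four_mul (m : ℕ) (x : ℝ) :
    walshDirichlet (4*m) x = (1 + r0 x) * (1 + r0 (2*x)) * walshDirichlet m (4*x) := by
  have : 4*m = 2*(2*m) := by ring
  rw [this, walshDirichlet_two_mul, walshDirichlet_two_mul]
  have : (2:ℝ)*(2*x) = 4*x := by ring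
  rw [this]; ring

lemma r0_of_Ico {x : ℝ} (h0 : 0 ≤ x) (h1 : x < 1/2) : r0 x = 1 := by
  unfold r0
  rw [Int.fract_eq_self.mpr ⟨h0, by linarith⟩, if_pos h1]

lemma r0_of_Ico' {x : ℝ} (h0 : 1/2 ≤ x) (h1 : x < 1) : r0 x = -1 := by
  unfold r0
  rw [Int.fract_eq_self.mpr ⟨by linarith, h1⟩, if_neg (not_lt.mpr h0)]

lemma factor_zero {x : ℝ} (hx : x ∈ Set.Ico (1/4:ℝ) 1) :
    (1 + r0 x) * (1 + r0 (2*x)) = 0 := by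
  obtain ⟨h0, h1⟩ := hx
  by_cases h : x < 1/2
  · rw [r0_of_Ico' (x := 2*x) (by linarith) (by linarith)]; ring
  · rw [r0_of_Ico' (x := x) (by linarith) h1]; ring

lemma measurable_rad (k : ℕ) : Measurable (rad k) := by
  unfold rad
  exact measurable_r0.comp (measurable_const_mul _)

lemma measurable_walsh (n : ℕ) : Measurable (walsh n) := by
  unfold walsh
  apply Finset.measurable_prod
  intro k _
  cases h : n.testBit k
  · simpa [h] using (measurable_const : Measurable fun _ : ℝ => (1:ℝ))
  · simpa [h] using measurable_rad k

lemma measurable_walshDirichlet (m : ℕ) : Measurable (walshDirichlet m) := by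
  unfold walshDirichlet
  exact Finset.measurable_sum _ fun i _ => measurable_walsh i

lemma integrableOn_walsh (n : ℕ) : IntegrableOn (walsh n) (Set.Ico (0:ℝ) 1) := by
  apply Integrable.mono' (integrable_const (1:ℝ))
  · exact (measurable_walsh n).aestronglyMeasurable
  · filter_upwards with x
    rw [Real.norm_eq_abs, abs_walsh]

lemma integrableOn_walshDirichlet (m : ℕ) : IntegrableOn (walshDirichlet m) (Set.Ico (0:ℝ) 1) := by
  unfold walshDirichlet
  exact integrable_finset_sum _ fun i _ => integrableOn_walsh i

lemma key (m : ℕ) :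
    (∫ x in Set.Ico (0:ℝ) 1, |walshDirichlet m x|) + 1/2
      ≤ ∫ x in Set.Ico (0:ℝ) 1, |walshDirichlet (4*m+1) x| := by
  set g : ℝ → ℝ := fun y => |4 * walshDirichlet m y + walsh m y| with hg
  -- pointwise description of D_{4m+1}
  have hD : ∀ x : ℝ, walshDirichlet (4*m+1) x
      = (1 + r0 x) * (1 + r0 (2*x)) * walshDirichlet m (4*x) + walsh m (4*x) := by
    intro x
    have hstep : walshDirichlet (4*m+1) x = walshDirichlet (4*m) x + walsh (4*m) x := by
      unfold walshDirichlet
      rw [Finset.sum_range_succ]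
    rw [hstep, walshDirichlet_four_mul, walsh_four_mul]
  -- split the integral
  have hsplit : Set.Ico (0:ℝ) 1 = Set.Ico (0:ℝ) (1/4) ∪ Set.Ico (1/4:ℝ) 1 :=
    (Set.Ico_union_Ico_eq_Ico (by norm_num) (by norm_num)).symm
  have hint : IntegrableOn (fun x => |walshDirichlet (4*m+1) x|) (Set.Ico (0:ℝ) 1) :=
    (integrableOn_walshDirichlet (4*m+1)).abs
  have h1 : (∫ x in Set.Ico (0:ℝ) 1, |walshDirichlet (4*m+1) x|)
      = (∫ x in Set.Ico (0:ℝ) (1/4), |walshDirichlet (4*m+1) x|)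
        + ∫ x in Set.Ico (1/4:ℝ) 1, |walshDirichlet (4*m+1) x| := by
    rw [hsplit]
    exact setIntegral_union (Set.Ico_disjoint_Ico_same) measurableSet_Ico
      (hint.mono_set (by rw [hsplit]; exact Set.subset_union_left))
      (hint.mono_set (by rw [hsplit]; exact Set.subset_union_right))
  -- right piece = 3/4
  have h2 : (∫ x in Set.Ico (1/4:ℝ) 1, |walshDirichlet (4*m+1) x|) = 3/4 := by
    rw [setIntegral_congr_fun measurableSet_Ico (g := fun _ => (1:ℝ)) ?_]
    · simp [Real.volume_Ico]
      norm_num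
    · intro x hx
      simp only
      rw [hD x, factor_zero hx, zero_mul, zero_add, abs_walsh]
  -- left piece = (1/4) ∫ g
  have h3 : (∫ x in Set.Ico (0:ℝ) (1/4), |walshDirichlet (4*m+1) x|)
      = 4⁻¹ * ∫ y in Set.Ico (0:ℝ) 1, g y := by
    have heq : ∀ x ∈ Set.Ico (0:ℝ) (1/4), |walshDirichlet (4*m+1) x| = g (4*x) := by
      intro x hx
      obtain ⟨hx0, hx1⟩ := hx
      rw [hD x, r0_of_Ico hx0 (by linarith), r0_of_Ico (by linarith) (by linarith)]
      norm_num [hg]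
    rw [setIntegral_congr_fun measurableSet_Ico heq]
    have hind : ∀ x : ℝ, (Set.Ico (0:ℝ) (1/4)).indicator (fun x => g (4*x)) x
        = (Set.Ico (0:ℝ) 1).indicator g (4*x) := by
      intro x
      by_cases hx : x ∈ Set.Ico (0:ℝ) (1/4)
      · obtain ⟨a, b⟩ := Set.mem_Ico.mp hx
        rw [Set.indicator_of_mem hx, Set.indicator_of_mem
          (Set.mem_Ico.mpr ⟨by linarith, by linarith⟩)]
      · rw [Set.indicator_of_notMem hx, Set.indicator_of_notMem]
        intro hmem
        obtain ⟨a, b⟩ := Set.mem_Ico.mp hmem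
        exact hx (Set.mem_Ico.mpr ⟨by linarith, by linarith⟩)
    rw [← integral_indicator measurableSet_Ico]
    simp_rw [hind]
    rw [MeasureTheory.Measure.integral_comp_mul_left ((Set.Ico (0:ℝ) 1).indicator g) 4,
      integral_indicator measurableSet_Ico]
    norm_num [smul_eq_mul]
  -- lower bound for ∫ g
  have h4 : 4 * (∫ x in Set.Ico (0:ℝ) 1, |walshDirichlet m x|) - 1
      ≤ ∫ y in Set.Ico (0:ℝ) 1, g y := by
    have hintg : IntegrableOn g (Set.Ico (0:ℝ) 1) :=
      (((integrableOn_walshDirichlet m).const_mul 4).add (integrableOn_walsh m)).abs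
    have hintl : IntegrableOn (fun y => 4 * |walshDirichlet m y| - 1) (Set.Ico (0:ℝ) 1) :=
      ((integrableOn_walshDirichlet m).abs.const_mul 4).sub (integrableOn_const (by simp [Real.volume_Ico]))
    have hmono : ∀ y ∈ Set.Ico (0:ℝ) 1, 4 * |walshDirichlet m y| - 1 ≤ g y := by
      intro y _
      have : |4 * walshDirichlet m y| - |walsh m y| ≤ |4 * walshDirichlet m y + walsh m y| := by
        have := abs_add_le (4 * walshDirichlet m y + walsh m y) (-(walsh m y))
        simp at this
        rw [abs_mul, abs_of_pos (by norm_num : (0:ℝ) < 4)]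
        linarith [this]
      rw [abs_mul] at this
      rw [abs_walsh] at this
      simpa using this
    have := setIntegral_mono_on hintl hintg measurableSet_Ico hmono
    rw [integral_sub ((integrableOn_walshDirichlet m).abs.const_mul 4) (integrableOn_const (by simp [Real.volume_Ico]))] at this
    rw [MeasureTheory.integral_const_mul] at this
    simp [Real.volume_Ico] at this
    linarith [this]
  rw [h1, h2, h3]
  linarith

/-- The sequence `s 0 = 0`, `s (n+1) = 4 * s n + 1`. -/
def dseq : ℕ → ℕ
  | 0 => 0
  | n + 1 => 4 * dseq n + 1

lemma seq_lower (n : ℕ) :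
    (n : ℝ)/2 ≤ ∫ x in Set.Ico (0:ℝ) 1, |walshDirichlet (dseq n) x| := by
  induction n with
  | zero => simp [dseq, walshDirichlet]
  | succ k ih =>
    have := key (dseq k)
    have h : dseq (k+1) = 4 * dseq k + 1 := rfl
    rw [h]
    push_cast
    linarith

/-- The `L¹` norms of the Dirichlet–Walsh kernels are unbounded:
`sup_m ∫_0^1 |D_m(x)| dx = ∞`. -/
theorem walshDirichlet_L1_unbounded :
    ∀ C : ℝ, ∃ m : ℕ, C < ∫ x in Set.Ico (0:ℝ) 1, |walshDirichlet m x| := by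
  intro C
  obtain ⟨n, hn⟩ := exists_nat_gt (2*C)
  exact ⟨dseq n, lt_of_lt_of_le (by linarith) (seq_lower n)⟩
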